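/- Let H_1 be the trace-normalized positive matrix with Bloch vector proportional to (1,1,1). Then H_1 commutes with U² where U = √(iσ_y)√(iσ_x); consequently, if h_1†h_1 = H_1 then h_1 U² h_1^{-1} is unitary. -/
import Mathlib


open Matrix ComplexOrder

noncomputable section

def σ1 : Matrix (Fin 2) (Fin 2) ℂ := !![0, 1; 1, 0]
def σ2 : Matrix (Fin 2) (Fin 2) ℂ := !![0, -Complex.I; Complex.I, 0]
def σ3 : Matrix (Fin 2) (Fin 2) ℂ := !![1, 0; 0, -1]

/-- `U = √(iσ_y)·√(iσ_x)` with the principal roots `(𝟙+iσ)/√2`. -/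
def Umat : Matrix (Fin 2) (Fin 2) ℂ :=
  ((Real.sqrt 2 : ℂ)⁻¹ • (1 + Complex.I • σ2)) * ((Real.sqrt 2 : ℂ)⁻¹ • (1 + Complex.I • σ1))

lemma sqrt2_sq : ((Real.sqrt 2 : ℝ) : ℂ)^2 = 2 := by
  norm_cast
  rw [Real.sq_sqrt] <;> norm_num

lemma Umat_eq : Umat = ((1:ℂ)/2) • !![1+Complex.I, 1+Complex.I; -1+Complex.I, 1-Complex.I] := by
  have h2 : ((Real.sqrt 2 : ℂ))⁻¹ * ((Real.sqrt 2 : ℂ))⁻¹ = 1/2 := by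
    rw [← mul_inv, ← sq, sqrt2_sq]; norm_num
  rw [Umat, Matrix.smul_mul, Matrix.mul_smul, smul_smul, h2]
  congr 1
  ext i j
  fin_cases i <;> fin_cases j <;>
    simp [σ1, σ2, Matrix.mul_apply, Fin.sum_univ_two, Matrix.one_apply, Complex.ext_iff] <;>
    first | (constructor <;> ring) | ring | trivial

lemma Usq_eq : Umat ^ 2 = ((1:ℂ)/2) • !![-1+Complex.I, 1+Complex.I; -1+Complex.I, -1-Complex.I] := by
  rw [pow_two, Umat_eq]
  ext i j
  fin_cases i <;> fin_cases j <;>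
    simp [Matrix.mul_apply, Fin.sum_univ_two, Complex.ext_iff] <;>
      first | (constructor <;> ring) | ring | trivial

/-- a trace-normalized positive matrix `H₁` with Bloch vector
proportional to `(1,1,1)` commutes with `U²`; consequently, for any invertible
`h₁` with `h₁ᴴh₁ = H₁`, the operator `h₁ U² h₁⁻¹` is unitary. -/
theorem stmt15 (t : ℝ) (H₁ : Matrix (Fin 2) (Fin 2) ℂ)
    (hdef : H₁ = ((1 : ℂ) / 2) •
      ((1 : Matrix (Fin 2) (Fin 2) ℂ) + (t : ℂ) • σ1 + (t : ℂ) • σ2 + (t : ℂ) • σ3))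
    (hpos : H₁.PosDef) :
    Commute H₁ (Umat ^ 2) ∧
    ∀ h₁ : Matrix (Fin 2) (Fin 2) ℂ, IsUnit h₁ → h₁ᴴ * h₁ = H₁ →
      (h₁ * Umat ^ 2 * h₁⁻¹) ∈ Matrix.unitaryGroup (Fin 2) ℂ := by
  have hcomm : Commute H₁ (Umat ^ 2) := by
    rw [Usq_eq, hdef]
    show _ * _ = _ * _
    ext i j
    fin_cases i <;> fin_cases j <;>
      simp [σ1, σ2, σ3, Matrix.mul_apply, Fin.sum_univ_two, Matrix.one_apply,
        Complex.ext_iff] <;> first | (constructor <;> ring) | ring | trivial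
  have hUunit : (Umat ^ 2)ᴴ * Umat ^ 2 = 1 := by
    rw [Usq_eq]
    ext i j
    fin_cases i <;> fin_cases j <;>
      simp [Matrix.mul_apply, Fin.sum_univ_two, Matrix.one_apply, Matrix.conjTranspose_apply,
        Complex.ext_iff] <;> first | (constructor <;> ring) | ring | trivial
  refine ⟨hcomm, fun h₁ hu hh => ?_⟩
  have hinv : h₁ * h₁⁻¹ = 1 := Matrix.mul_nonsing_inv h₁ ((Matrix.isUnit_iff_isUnit_det h₁).mp hu)
  rw [Matrix.mem_unitaryGroup_iff']
  have key : h₁ᴴ * h₁ * Umat ^ 2 = Umat ^ 2 * (h₁ᴴ * h₁) := by rw [hh]; exact hcomm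
  calc star (h₁ * Umat ^ 2 * h₁⁻¹) * (h₁ * Umat ^ 2 * h₁⁻¹)
      = (h₁⁻¹)ᴴ * ((Umat ^ 2)ᴴ * ((h₁ᴴ * h₁ * Umat ^ 2) * h₁⁻¹)) := by
        simp only [Matrix.star_eq_conjTranspose, Matrix.conjTranspose_mul, Matrix.mul_assoc]
    _ = (h₁⁻¹)ᴴ * ((Umat ^ 2)ᴴ * (Umat ^ 2 * (h₁ᴴ * (h₁ * h₁⁻¹)))) := by
        rw [key]; simp only [Matrix.mul_assoc]
    _ = (h₁⁻¹)ᴴ * h₁ᴴ := by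
        rw [hinv, Matrix.mul_one, ← Matrix.mul_assoc ((Umat ^ 2)ᴴ) (Umat ^ 2) h₁ᴴ,
          hUunit, Matrix.one_mul]
    _ = 1 := by rw [← Matrix.conjTranspose_mul, hinv, Matrix.conjTranspose_one]
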